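/- If S(x) is a power sum such that S(n) ∈ ℚ for every n ∈ ℕ, then the function f : ℕ → ℚ defined by f(n) = S(n) is a linear recurrence sequence in ℚ. -/

import Mathlib

open Polynomial

noncomputable def Eshift : Module.End ℂ (ℕ → ℂ) where
  toFun f := fun n => f (n + 1)
  map_add' _ _ := rfl
  map_smul' _ _ := rfl

lemma Eshift_pow (j : ℕ) (f : ℕ → ℂ) (n : ℕ) : (Eshift ^ j) f n = f (n + j) := by
  induction j generalizing f with
  | zero => rfl
  | succ m ih =>
    rw [pow_succ]
    show (Eshift ^ m) (Eshift f) n = f (n + (m + 1))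
    rw [ih]
    rfl

lemma aeval_Eshift_apply (Q : ℂ[X]) (f : ℕ → ℂ) (n : ℕ) :
    (Polynomial.aeval Eshift Q) f n
      = ∑ j ∈ Finset.range (Q.natDegree + 1), Q.coeff j * f (n + j) := by
  rw [Polynomial.aeval_eq_sum_range]
  simp [LinearMap.sum_apply, Eshift_pow]

lemma Eshift_sub (αc : ℂ) (f : ℕ → ℂ) :
    (Polynomial.aeval Eshift (X - C αc)) f = fun n => f (n + 1) - αc * f n := by
  funext n
  rw [map_sub, aeval_X, aeval_C]
  simp [Module.algebraMap_end_apply, Eshift]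

lemma kill (αc : ℂ) : ∀ d, ∀ p : ℂ[X], p.natDegree ≤ d →
    (Polynomial.aeval Eshift ((X - C αc) ^ (d + 1)))
      (fun n : ℕ => p.eval (n : ℂ) * αc ^ n) = 0 := by
  intro d
  induction d with
  | zero =>
    intro p hp
    rw [pow_one, Eshift_sub]
    funext n
    have hc := Polynomial.eq_C_of_natDegree_le_zero hp
    rw [hc]
    simp [pow_succ]
    ring
  | succ d ih =>
    intro p hp
    set q : ℂ[X] := C αc * (p.comp (X + 1) - p) with hqdef
    have hstep : (Polynomial.aeval Eshift (X - C αc)) (fun n : ℕ => p.eval (n : ℂ) * αc ^ n)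
        = fun n : ℕ => q.eval (n : ℂ) * αc ^ n := by
      rw [Eshift_sub]
      funext n
      simp only [hqdef, Polynomial.eval_mul, Polynomial.eval_C, Polynomial.eval_sub,
        Polynomial.eval_comp, Polynomial.eval_add, Polynomial.eval_X, Polynomial.eval_one]
      push_cast
      ring
    have hX1 : (X + 1 : ℂ[X]).natDegree = 1 := by
      simpa using Polynomial.natDegree_X_add_C (1 : ℂ)
    have hcompdeg : (p.comp (X + 1)).natDegree = p.natDegree := by
      rw [Polynomial.natDegree_comp, hX1, mul_one]
    have hq : q.natDegree ≤ d := by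
      refine le_trans (Polynomial.natDegree_C_mul_le _ _) ?_
      rw [Polynomial.natDegree_le_iff_coeff_eq_zero]
      intro m hm
      rw [Polynomial.coeff_sub, sub_eq_zero]
      rcases Nat.lt_or_ge p.natDegree m with hlt | hge
      · rw [Polynomial.coeff_eq_zero_of_natDegree_lt (by omega : (p.comp (X+1)).natDegree < m),
          Polynomial.coeff_eq_zero_of_natDegree_lt hlt]
      · have hm' : m = p.natDegree := by omega
        subst hm'
        rw [← hcompdeg, Polynomial.coeff_natDegree, hcompdeg, Polynomial.coeff_natDegree]
        by_cases hp0 : p = 0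
        · simp [hp0]
        · rw [Polynomial.leadingCoeff_comp (by rw [hX1]; exact one_ne_zero)]
          have hlc : (X + 1 : ℂ[X]).leadingCoeff = 1 := by
            simpa using (Polynomial.monic_X_add_C (1 : ℂ)).leadingCoeff
          rw [hlc, one_pow, mul_one]
    have hpow : (X - C αc) ^ (d + 1 + 1) = (X - C αc) ^ (d + 1) * (X - C αc) := by
      rw [pow_succ]
    rw [hpow, map_mul]
    show (Polynomial.aeval Eshift ((X - C αc) ^ (d + 1)))
        ((Polynomial.aeval Eshift (X - C αc)) fun n : ℕ => p.eval (n : ℂ) * αc ^ n) = 0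
    rw [hstep]
    exact ih q hq

theorem stmt12 (k : ℕ) (p : Fin k → Polynomial ℂ) (α : Fin k → ℂ)
    (hp0 : ∀ i, p i ≠ 0) (hpalg : ∀ i n, IsAlgebraic ℚ ((p i).coeff n))
    (hα0 : ∀ i, α i ≠ 0) (hαalg : ∀ i, IsAlgebraic ℚ (α i))
    (hαinj : Function.Injective α)
    (g : ℕ → ℚ) (hg : ∀ n ≥ 1, (g n : ℂ) = ∑ i, (p i).eval (n : ℂ) * α i ^ n) :
    ∃ (l : ℕ) (a : ℕ → ℚ), (l = 0 ∨ a 0 ≠ 0) ∧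
      ∀ n ≥ 1, g (n + l) = ∑ i ∈ Finset.range l, a i * g (n + i) := by
  have hint : ∀ i, IsIntegral ℚ (α i) := fun i => (hαalg i).isIntegral
  set q : ℚ[X] := ∏ i, (minpoly ℚ (α i)) ^ ((p i).natDegree + 1) with hqdef
  have hqmonic : q.Monic := monic_prod_of_monic _ _ fun i _ => (minpoly.monic (hint i)).pow _
  have hq0 : q.coeff 0 ≠ 0 := by
    rw [Polynomial.coeff_zero_eq_eval_zero, hqdef, Polynomial.eval_prod]
    refine Finset.prod_ne_zero_iff.mpr fun i _ => ?_
    rw [Polynomial.eval_pow]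
    refine pow_ne_zero _ ?_
    rw [← Polynomial.coeff_zero_eq_eval_zero]
    exact minpoly.coeff_zero_ne_zero (hint i) (hα0 i)
  set Qc : ℂ[X] := q.map (algebraMap ℚ ℂ) with hQcdef
  have hdvd : ∀ i : Fin k, (X - C (α i)) ^ ((p i).natDegree + 1) ∣ Qc := by
    intro i
    have h1 : (X - C (α i)) ∣ (minpoly ℚ (α i)).map (algebraMap ℚ ℂ) := by
      rw [Polynomial.dvd_iff_isRoot]
      simp [Polynomial.IsRoot, Polynomial.eval_map, ← Polynomial.aeval_def, minpoly.aeval]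
    refine dvd_trans (pow_dvd_pow_of_dvd h1 _) ?_
    have h2 : (minpoly ℚ (α i)) ^ ((p i).natDegree + 1) ∣ q :=
      Finset.dvd_prod_of_mem _ (Finset.mem_univ i)
    simpa [Polynomial.map_pow] using Polynomial.map_dvd (algebraMap ℚ ℂ) h2
  -- the kill: aeval Eshift Qc applied to the full power sum is 0
  have hkillall : (Polynomial.aeval Eshift Qc)
      (fun n : ℕ => ∑ i, (p i).eval (n : ℂ) * α i ^ n) = 0 := by
    have : (fun n : ℕ => ∑ i, (p i).eval (n : ℂ) * α i ^ n)
        = ∑ i, (fun n : ℕ => (p i).eval (n : ℂ) * α i ^ n) := by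
      funext n; simp
    rw [this, map_sum]
    refine Finset.sum_eq_zero fun i _ => ?_
    obtain ⟨B, hB⟩ := hdvd i
    rw [hB, mul_comm, map_mul]
    show (Polynomial.aeval Eshift B)
        ((Polynomial.aeval Eshift ((X - C (α i)) ^ ((p i).natDegree + 1)))
          fun n : ℕ => (p i).eval (n : ℂ) * α i ^ n) = 0
    rw [kill (α i) ((p i).natDegree) (p i) le_rfl]
    exact map_zero _
  set l := q.natDegree with hldef
  refine ⟨l, fun j => - q.coeff j, Or.inr (by simpa using hq0), fun n hn => ?_⟩
  have hQcdeg : Qc.natDegree = l := by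
    rw [hQcdef, Polynomial.natDegree_map]
  have key : ∑ j ∈ Finset.range (l + 1), (q.coeff j : ℂ) * (g (n + j) : ℂ) = 0 := by
    have := congrFun hkillall n
    rw [aeval_Eshift_apply] at this
    rw [Pi.zero_apply] at this
    rw [hQcdeg] at this
    rw [← this]
    refine Finset.sum_congr rfl fun j hj => ?_
    rw [hQcdef, Polynomial.coeff_map]
    have : ((g (n + j) : ℚ) : ℂ) = ∑ i, (p i).eval ((n + j : ℕ) : ℂ) * α i ^ (n + j) :=
      hg (n + j) (by omega)
    rw [this]
    norm_num [Algebra.algebraMap_eq_smul_one]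
  have keyQ : ∑ j ∈ Finset.range (l + 1), q.coeff j * g (n + j) = 0 := by
    have : ((∑ j ∈ Finset.range (l + 1), q.coeff j * g (n + j) : ℚ) : ℂ) = 0 := by
      push_cast
      exact key
    exact_mod_cast this
  rw [Finset.sum_range_succ] at keyQ
  have hlead : q.coeff l = 1 := hqmonic.coeff_natDegree
  rw [hlead, one_mul] at keyQ
  have : g (n + l) = - ∑ j ∈ Finset.range l, q.coeff j * g (n + j) := by linarith
  rw [this, ← Finset.sum_neg_distrib]
  refine Finset.sum_congr rfl fun j _ => by ring
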